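/- For each i = 1, …, n one has f_i ∈ X_i^d + Σ_{e=0}^{d−1} P_{i−1} X_i^e Y_{r,i} and h_i ∈ a_d + Σ_{f=1}^{d} P_{i−1} X_i^f Y_{r,i}, where P_{i−1} := R[X_1^{±1}, …, X_{i−1}^{±1}] ⊆ Ŷ_{r,n} and Y_{r,i} is the R-subalgebra of Ŷ_{r,n} generated by t_1, …, t_i, g_1, …, g_{i−1}. -/

import Mathlib

noncomputable section

namespace YH

/-- Generators of the affine Yokonuma–Hecke algebra `Ŷ_{r,n}`:
`t 1, …, t n`, `g 1, …, g (n-1)`, `X₁` and `X₁⁻¹`. -/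
inductive Gen (n : ℕ) : Type
  | t (i : Fin n) : Gen n
  | g (i : Fin (n - 1)) : Gen n
  | X : Gen n
  | Xinv : Gen n

variable (r n d : ℕ) (R : Type) [CommRing R] [Invertible (r : R)] (q : Rˣ) (v : ℕ → Rˣ)

/-- The free `R`-algebra on the generators. -/
abbrev F : Type := FreeAlgebra R (Gen n)

/-- The generator `t_i` (1-based index, junk value 1 out of range). -/
def tF (i : ℕ) : F n R :=
  if h : 1 ≤ i ∧ i ≤ n then FreeAlgebra.ι R (Gen.t ⟨i - 1, by omega⟩) else 1

/-- The generator `g_i` (1-based index, junk value 1 out of range). -/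
def gF (i : ℕ) : F n R :=
  if h : 1 ≤ i ∧ i ≤ n - 1 then FreeAlgebra.ι R (Gen.g ⟨i - 1, by omega⟩) else 1

/-- The generator `X₁`. -/
def XF : F n R := FreeAlgebra.ι R Gen.X

/-- The generator `X₁⁻¹`. -/
def XinvF : F n R := FreeAlgebra.ι R Gen.Xinv

/-- `e_i = (1/r) ∑_{s=0}^{r-1} t_i^s t_{i+1}^{-s}` (using `t^r = 1`,
`t^{-s}` is represented by `t^{r-s}`). -/
def eF (i : ℕ) : F n R :=
  ⅟(r : R) • ∑ s ∈ Finset.range r, tF n R i ^ s * tF n R (i + 1) ^ (r - s)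

/-- The scalar `q - q⁻¹`. -/
def qd : R := (q : R) - ((q⁻¹ : Rˣ) : R)

/-- The defining relations of the affine Yokonuma–Hecke algebra `Ŷ_{r,n}`. -/
inductive Rel : F n R → F n R → Prop
  | gg {i j : ℕ} (h1 : 1 ≤ i) (h2 : i + 2 ≤ j) (h3 : j ≤ n - 1) :
      Rel (gF n R i * gF n R j) (gF n R j * gF n R i)
  | braid {i : ℕ} (h1 : 1 ≤ i) (h2 : i + 1 ≤ n - 1) :
      Rel (gF n R i * gF n R (i + 1) * gF n R i)
        (gF n R (i + 1) * gF n R i * gF n R (i + 1))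
  | tt {i j : ℕ} (h1 : 1 ≤ i) (h2 : i ≤ n) (h3 : 1 ≤ j) (h4 : j ≤ n) :
      Rel (tF n R i * tF n R j) (tF n R j * tF n R i)
  | gt {i j : ℕ} (h1 : 1 ≤ i) (h2 : i ≤ n - 1) (h3 : 1 ≤ j) (h4 : j ≤ n) :
      Rel (gF n R i * tF n R j)
        (tF n R (if j = i then i + 1 else if j = i + 1 then i else j) * gF n R i)
  | tpow {i : ℕ} (h1 : 1 ≤ i) (h2 : i ≤ n) : Rel (tF n R i ^ r) 1
  | gsq {i : ℕ} (h1 : 1 ≤ i) (h2 : i ≤ n - 1) :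
      Rel (gF n R i ^ 2) (1 + qd R q • (eF r n R i * gF n R i))
  | XXinv : Rel (XF n R * XinvF n R) 1
  | XinvX : Rel (XinvF n R * XF n R) 1
  | gXgX : Rel (gF n R 1 * XF n R * gF n R 1 * XF n R)
      (XF n R * gF n R 1 * XF n R * gF n R 1)
  | gX {i : ℕ} (h1 : 2 ≤ i) (h2 : i ≤ n - 1) : Rel (gF n R i * XF n R) (XF n R * gF n R i)
  | tX {j : ℕ} (h1 : 1 ≤ j) (h2 : j ≤ n) : Rel (tF n R j * XF n R) (XF n R * tF n R j)

/-- The affine Yokonuma–Hecke algebra `Ŷ_{r,n}`, presented by generators and relations. -/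
abbrev AYH : Type := RingQuot (Rel r n R q)

/-- The canonical projection from the free algebra onto `Ŷ_{r,n}`. -/
def mkA : F n R →ₐ[R] AYH r n R q := RingQuot.mkAlgHom R (Rel r n R q)

/-- The element `t_i` of `Ŷ_{r,n}`. -/
def tA (i : ℕ) : AYH r n R q := mkA r n R q (tF n R i)

/-- The element `g_i` of `Ŷ_{r,n}`. -/
def gA (i : ℕ) : AYH r n R q := mkA r n R q (gF n R i)

/-- The element `e_i` of `Ŷ_{r,n}`. -/
def eA (i : ℕ) : AYH r n R q := mkA r n R q (eF r n R i)

/-- The idempotent `e_{i,k} = (1/r) ∑_{s=0}^{r-1} t_i^s t_k^{-s}` of `Ŷ_{r,n}`. -/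
def eijA (i k : ℕ) : AYH r n R q :=
  ⅟(r : R) • ∑ s ∈ Finset.range r, tA r n R q i ^ s * tA r n R q k ^ (r - s)

/-- `g_i⁻¹ = g_i - (q - q⁻¹) e_i`. -/
def ginvA (i : ℕ) : AYH r n R q := gA r n R q i - qd R q • eA r n R q i

/-- The elements `X_i`, defined by `X_{i+1} = g_i X_i g_i` (1-based; `X 0` is junk). -/
def XA : ℕ → AYH r n R q
  | 0 => 1
  | 1 => mkA r n R q (XF n R)
  | i + 2 => gA r n R q (i + 1) * XA (i + 1) * gA r n R q (i + 1)

/-- The elements `X_i⁻¹`, defined by `X_{i+1}⁻¹ = g_i⁻¹ X_i⁻¹ g_i⁻¹`. -/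
def XAinv : ℕ → AYH r n R q
  | 0 => 1
  | 1 => mkA r n R q (XinvF n R)
  | i + 2 => ginvA r n R q (i + 1) * XAinv (i + 1) * ginvA r n R q (i + 1)

/-- `f_1 = (X_1 - v_1) ⋯ (X_1 - v_d)`. -/
def f1A : AYH r n R q :=
  ((List.range d).map fun l => XA r n R q 1 - algebraMap R (AYH r n R q) ((v l : R))).prod

/-- The elements `f_i`, defined by `f_{i+1} = g_i f_i g_i`. -/
def fA : ℕ → AYH r n R q
  | 0 => 1
  | 1 => f1A r n d R q v
  | i + 2 => gA r n R q (i + 1) * fA (i + 1) * gA r n R q (i + 1)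

/-- The elements `h_i`, defined by `h_1 = f_1`, `h_{i+1} = g_i h_i g_i⁻¹`. -/
def hA : ℕ → AYH r n R q
  | 0 => 1
  | 1 => f1A r n d R q v
  | i + 2 => gA r n R q (i + 1) * hA (i + 1) * ginvA r n R q (i + 1)

/-- The constant term `a_d = (-1)^d v_1 ⋯ v_d` of `f_1`. -/
def adC : R := (-1) ^ d * ((List.range d).map fun l => ((v l : R))).prod

/-- The Yokonuma–Hecke subalgebra `Y_{r,m} ⊆ Ŷ_{r,n}`, generated by
`t_1, …, t_m, g_1, …, g_{m-1}`. -/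
def Ysub (m : ℕ) : Subalgebra R (AYH r n R q) :=
  Algebra.adjoin R
    ({x | ∃ i, 1 ≤ i ∧ i ≤ m ∧ x = tA r n R q i} ∪
     {x | ∃ i, 1 ≤ i ∧ i ≤ m - 1 ∧ x = gA r n R q i})

/-- The Laurent polynomial subalgebra `P_m = R[X_1^{±1},…,X_m^{±1}] ⊆ Ŷ_{r,n}`. -/
def Psub (m : ℕ) : Subalgebra R (AYH r n R q) :=
  Algebra.adjoin R
    {x | ∃ i, 1 ≤ i ∧ i ≤ m ∧ (x = XA r n R q i ∨ x = XAinv r n R q i)}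

/-- The power `X_i^a` for an integer `a`. -/
def XzA (i : ℕ) (a : ℤ) : AYH r n R q :=
  if 0 ≤ a then XA r n R q i ^ a.toNat else XAinv r n R q i ^ (-a).toNat

/-- The monomial `X^α = X_1^{α_1} ⋯ X_n^{α_n}` for `α ∈ ℤ^n`. -/
def XmonA (α : Fin n → ℤ) : AYH r n R q :=
  (List.ofFn fun j : Fin n => XzA r n R q ((j : ℕ) + 1) (α j)).prod

/-- The element `P_Z = P_{z_1} ⋯ P_{z_k}` (`z_1 < ⋯ < z_k` the elements of `Z`),
where `P_z = f_z` if `α_z ≥ 0` and `P_z = h_z` if `α_z < 0`. -/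
def PZA (α : Fin n → ℤ) (Z : Finset (Fin n)) : AYH r n R q :=
  ((Z.sort (· ≤ ·)).map fun z =>
    if 0 ≤ α z then fA r n d R q v ((z : ℕ) + 1) else hA r n d R q v ((z : ℕ) + 1)).prod

/-- The index set `Π_n`: pairs `(α, Z)` with `Z ⊆ {1,…,n}`, `α ∈ ℤ^n` and
`0 ≤ α_i < d` whenever `i ∉ Z`. -/
def Pin : Type :=
  {p : (Fin n → ℤ) × Finset (Fin n) // ∀ i, i ∉ p.2 → 0 ≤ p.1 i ∧ p.1 i < d}

/-- The polynomial `f_1 = (X_1 - v_1) ⋯ (X_1 - v_d)` in the free algebra. -/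
def f1F : F n R :=
  ((List.range d).map fun l => XF n R - algebraMap R (F n R) ((v l : R))).prod

/-- The defining relations of the cyclotomic Yokonuma–Hecke algebra `Y_{r,n}^d`:
the relations of `Ŷ_{r,n}` together with the cyclotomic relation `f_1 = 0`.
The resulting quotient is `Ŷ_{r,n}/J_d`, where `J_d` is the two-sided ideal of
`Ŷ_{r,n}` generated by `f_1`. -/
inductive CRel : F n R → F n R → Prop
  | base {a b : F n R} : Rel r n R q a b → CRel a b
  | cyc : CRel (f1F n d R v) 0

/-- The cyclotomic Yokonuma–Hecke algebra `Y_{r,n}^d = Ŷ_{r,n}/J_d`. -/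
abbrev CYH : Type := RingQuot (CRel r n d R q v)

/-- The canonical projection of the free algebra onto `Y_{r,n}^d`. -/
def mkC : F n R →ₐ[R] CYH r n d R q v := RingQuot.mkAlgHom R (CRel r n d R q v)

/-- The image of `t_i` in `Y_{r,n}^d`. -/
def tC (i : ℕ) : CYH r n d R q v := mkC r n d R q v (tF n R i)

/-- The image of `g_i` in `Y_{r,n}^d`. -/
def gC (i : ℕ) : CYH r n d R q v := mkC r n d R q v (gF n R i)

/-- The image of `e_i` in `Y_{r,n}^d`. -/
def eC (i : ℕ) : CYH r n d R q v := mkC r n d R q v (eF r n R i)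

/-- The idempotent `e_{i,k} = (1/r) ∑_{s=0}^{r-1} t_i^s t_k^{-s}` in `Y_{r,n}^d`. -/
def eijC (i k : ℕ) : CYH r n d R q v :=
  ⅟(r : R) • ∑ s ∈ Finset.range r, tC r n d R q v i ^ s * tC r n d R q v k ^ (r - s)

/-- The element `g_i⁻¹ = g_i - (q - q⁻¹) e_i` in `Y_{r,n}^d`. -/
def ginvC (i : ℕ) : CYH r n d R q v := gC r n d R q v i - qd R q • eC r n d R q v i

/-- The elements `X_i` of `Y_{r,n}^d`, with `X_{i+1} = g_i X_i g_i`. -/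
def XC : ℕ → CYH r n d R q v
  | 0 => 1
  | 1 => mkC r n d R q v (XF n R)
  | i + 2 => gC r n d R q v (i + 1) * XC (i + 1) * gC r n d R q v (i + 1)

/-- The elements `X_i⁻¹` of `Y_{r,n}^d`. -/
def XCinv : ℕ → CYH r n d R q v
  | 0 => 1
  | 1 => mkC r n d R q v (XinvF n R)
  | i + 2 => ginvC r n d R q v (i + 1) * XCinv (i + 1) * ginvC r n d R q v (i + 1)

/-- Swap the entries at positions `i` and `i+1` of a list. -/
def swapAt (L : List ℕ) (i : ℕ) : List ℕ :=
  (L.set i (L.getD (i + 1) 0)).set (i + 1) (L.getD i 0)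

/-- Bubble-sort word: the list of (1-based) positions of the adjacent transpositions
performed when sorting `L`, repeatedly swapping the first adjacent descent. -/
def sortWord : ℕ → List ℕ → List ℕ
  | 0, _ => []
  | fuel + 1, L =>
    match (List.range (L.length - 1)).find? (fun i => L.getD (i + 1) 0 < L.getD i 0) with
    | none => []
    | some i => (i + 1) :: sortWord fuel (swapAt L i)

/-- A canonical reduced word for a permutation `w`, obtained by bubble-sorting its
one-line notation. -/
def permWord (w : Equiv.Perm (Fin n)) : List ℕ :=
  sortWord (n * n) (List.ofFn fun i => ((w i : Fin n) : ℕ))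

/-- The length `l(w)` of a permutation: its number of inversions. -/
def len (w : Equiv.Perm (Fin n)) : ℕ :=
  (Finset.univ.filter fun p : Fin n × Fin n => p.1 < p.2 ∧ w p.2 < w p.1).card

/-- The element `g_w` of `Ŷ_{r,n}` attached to a permutation `w ∈ S_n`
(product of the `g_i` along a reduced word for `w`). -/
def gwA (w : Equiv.Perm (Fin n)) : AYH r n R q :=
  ((permWord n w).map fun i => gA r n R q i).prod

/-- The element `g_w` of `Y_{r,n}^d`. -/
def gwC (w : Equiv.Perm (Fin n)) : CYH r n d R q v :=
  ((permWord n w).map fun i => gC r n d R q v i).prod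

/-- The monomial `t^β = t_1^{β_1} ⋯ t_n^{β_n}` in `Y_{r,n}^d`. -/
def tmonC (β : Fin n → ℕ) : CYH r n d R q v :=
  (List.ofFn fun i : Fin n => tC r n d R q v ((i : ℕ) + 1) ^ β i).prod

/-- The monomial `X^α = X_1^{α_1} ⋯ X_n^{α_n}` (natural exponents) in `Y_{r,n}^d`. -/
def XmonNC (α : Fin n → ℕ) : CYH r n d R q v :=
  (List.ofFn fun i : Fin n => XC r n d R q v ((i : ℕ) + 1) ^ α i).prod

/-- The subalgebra `Y_{r,m}^d` of `Y_{r,n}^d` (the image of `Y_{r,m}^d` under the canonical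
inclusion), generated by `t_1,…,t_m, g_1,…,g_{m-1}, X_1^{±1}`. -/
def YsubC (m : ℕ) : Subalgebra R (CYH r n d R q v) :=
  Algebra.adjoin R
    ({x | ∃ i, 1 ≤ i ∧ i ≤ m ∧ x = tC r n d R q v i} ∪
     {x | ∃ i, 1 ≤ i ∧ i ≤ m - 1 ∧ x = gC r n d R q v i} ∪
     {XC r n d R q v 1, XCinv r n d R q v 1})

end YH
namespace YH

section Aux
variable (r n d : ℕ) (R : Type) [CommRing R] [Invertible (r : R)] (q : Rˣ) (v : ℕ → Rˣ)

lemma rel_eq {a b : F n R} (h : Rel r n R q a b) : mkA r n R q a = mkA r n R q b :=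
  RingQuot.mkAlgHom_rel R h

/-- The transposition `s_i` acting on indices. -/
def sig (i j : ℕ) : ℕ := if j = i then i + 1 else if j = i + 1 then i else j

lemma sig_sig (i j : ℕ) : sig i (sig i j) = j := by
  unfold sig; split_ifs <;> omega

lemma sig_le {i j : ℕ} (h1 : 1 ≤ i) (h2 : i ≤ n - 1) (h3 : 1 ≤ j) (h4 : j ≤ n) :
    1 ≤ sig i j ∧ sig i j ≤ n := by
  unfold sig; split_ifs <;> omega

lemma gA_comm_gA {i j : ℕ} (h1 : 1 ≤ i) (h2 : i + 2 ≤ j) (h3 : j ≤ n - 1) :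
    gA r n R q i * gA r n R q j = gA r n R q j * gA r n R q i := by
  simp only [gA, ← map_mul]
  exact rel_eq r n R q (Rel.gg h1 h2 h3)

lemma braidA {i : ℕ} (h1 : 1 ≤ i) (h2 : i + 1 ≤ n - 1) :
    gA r n R q i * gA r n R q (i+1) * gA r n R q i
      = gA r n R q (i+1) * gA r n R q i * gA r n R q (i+1) := by
  simp only [gA, ← map_mul]
  exact rel_eq r n R q (Rel.braid h1 h2)

lemma gA_tA {i j : ℕ} (h1 : 1 ≤ i) (h2 : i ≤ n - 1) (h3 : 1 ≤ j) (h4 : j ≤ n) :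
    gA r n R q i * tA r n R q j = tA r n R q (sig i j) * gA r n R q i := by
  simp only [gA, tA, ← map_mul]
  exact rel_eq r n R q (Rel.gt h1 h2 h3 h4)

lemma tA_gA {i j : ℕ} (h1 : 1 ≤ i) (h2 : i ≤ n - 1) (h3 : 1 ≤ j) (h4 : j ≤ n) :
    tA r n R q j * gA r n R q i = gA r n R q i * tA r n R q (sig i j) := by
  have hb := sig_le n h1 h2 h3 h4
  have h := gA_tA r n R q h1 h2 hb.1 hb.2
  rw [sig_sig] at h
  exact h.symm

lemma gA_tA_pow {i j : ℕ} (h1 : 1 ≤ i) (h2 : i ≤ n - 1) (h3 : 1 ≤ j) (h4 : j ≤ n) (s : ℕ) :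
    gA r n R q i * tA r n R q j ^ s = tA r n R q (sig i j) ^ s * gA r n R q i := by
  induction s with
  | zero => simp
  | succ s ih =>
      rw [pow_succ, ← mul_assoc, ih, mul_assoc, gA_tA r n R q h1 h2 h3 h4, ← mul_assoc,
        ← pow_succ]

lemma tA_pow_r {i : ℕ} (h1 : 1 ≤ i) (h2 : i ≤ n) : tA r n R q i ^ r = 1 := by
  simp only [tA, ← map_pow]
  rw [rel_eq r n R q (Rel.tpow h1 h2), map_one]

lemma tA_comm {i j : ℕ} (h1 : 1 ≤ i) (h2 : i ≤ n) (h3 : 1 ≤ j) (h4 : j ≤ n) :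
    tA r n R q i * tA r n R q j = tA r n R q j * tA r n R q i := by
  simp only [tA, ← map_mul]
  exact rel_eq r n R q (Rel.tt h1 h2 h3 h4)

lemma eA_eq (i : ℕ) :
    eA r n R q i = ⅟(r : R) • ∑ s ∈ Finset.range r,
      tA r n R q i ^ s * tA r n R q (i + 1) ^ (r - s) := by
  simp only [eA, eF, tA, map_smul, map_sum, map_mul, map_pow]

lemma gA_sq {i : ℕ} (h1 : 1 ≤ i) (h2 : i ≤ n - 1) :
    gA r n R q i ^ 2 = 1 + qd R q • (eA r n R q i * gA r n R q i) := by
  have h := rel_eq r n R q (Rel.gsq (r := r) h1 h2)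
  simpa only [gA, eA, map_pow, map_add, map_one, map_smul, map_mul] using h

lemma sum_pow_swap {S : Type} [Ring S] (hr : 1 ≤ r) (a b : S) (hc : Commute a b)
    (ha : a ^ r = 1) (hb : b ^ r = 1) :
    ∑ s ∈ Finset.range r, b ^ s * a ^ (r - s) = ∑ s ∈ Finset.range r, a ^ s * b ^ (r - s) := by
  obtain ⟨m, rfl⟩ : ∃ m, r = m + 1 := ⟨r - 1, by omega⟩
  rw [Finset.sum_congr rfl (fun s _ => ((hc.symm.pow_pow s (m + 1 - s)).eq))]
  rw [← Finset.sum_range_reflect (fun s => a ^ (m + 1 - s) * b ^ s) (m + 1)]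
  rw [Finset.sum_range_succ, Finset.sum_range_succ']
  have e1 : ∀ j ∈ Finset.range m,
      a ^ (m + 1 - (m + 1 - 1 - j)) * b ^ (m + 1 - 1 - j) = a ^ (j + 1) * b ^ (m - j) := by
    intro j hj
    simp only [Finset.mem_range] at hj
    rw [show m + 1 - (m + 1 - 1 - j) = j + 1 by omega, show m + 1 - 1 - j = m - j by omega]
  have e2 : ∀ j ∈ Finset.range m,
      a ^ (j + 1) * b ^ (m + 1 - (j + 1)) = a ^ (j + 1) * b ^ (m - j) := by
    intro j hj
    rw [show m + 1 - (j + 1) = m - j by omega]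
  rw [Finset.sum_congr rfl e1, Finset.sum_congr rfl e2]
  rw [show m + 1 - 1 - m = 0 by omega]
  simp only [Nat.sub_zero, ha, hb, pow_zero, one_mul, mul_one]

lemma eA_gA_comm (hr : 1 ≤ r) {i : ℕ} (h1 : 1 ≤ i) (h2 : i ≤ n - 1) :
    eA r n R q i * gA r n R q i = gA r n R q i * eA r n R q i := by
  have hi : i ≤ n := by omega
  have hi1 : i + 1 ≤ n := by omega
  rw [eA_eq, smul_mul_assoc, mul_smul_comm]
  congr 1
  rw [Finset.sum_mul, Finset.mul_sum]
  have key : ∀ s ∈ Finset.range r,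
      gA r n R q i * (tA r n R q i ^ s * tA r n R q (i + 1) ^ (r - s))
        = (tA r n R q (i + 1) ^ s * tA r n R q i ^ (r - s)) * gA r n R q i := by
    intro s _
    have s1 : sig i i = i + 1 := by unfold sig; rw [if_pos rfl]
    have s2 : sig i (i + 1) = i := by
      unfold sig; rw [if_neg (by omega), if_pos rfl]
    rw [← mul_assoc, gA_tA_pow r n R q h1 h2 h1 hi, s1, mul_assoc,
      gA_tA_pow r n R q h1 h2 (by omega) hi1, s2, ← mul_assoc]
  rw [Finset.sum_congr rfl key, ← Finset.sum_mul, ← Finset.sum_mul]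
  congr 1
  exact (sum_pow_swap r hr _ _ (tA_comm r n R q h1 hi (by omega) hi1)
    (tA_pow_r r n R q h1 hi) (tA_pow_r r n R q (by omega) hi1)).symm

lemma ginvA_gA {i : ℕ} (h1 : 1 ≤ i) (h2 : i ≤ n - 1) :
    ginvA r n R q i * gA r n R q i = 1 := by
  unfold ginvA
  rw [sub_mul, smul_mul_assoc, ← sq, gA_sq r n R q h1 h2, add_sub_cancel_right]

lemma gA_ginvA (hr : 1 ≤ r) {i : ℕ} (h1 : 1 ≤ i) (h2 : i ≤ n - 1) :
    gA r n R q i * ginvA r n R q i = 1 := by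
  unfold ginvA
  rw [mul_sub, mul_smul_comm, ← sq, gA_sq r n R q h1 h2,
    ← eA_gA_comm r n R q hr h1 h2, add_sub_cancel_right]

end Aux
section Aux2
variable (r n d : ℕ) (R : Type) [CommRing R] [Invertible (r : R)] (q : Rˣ) (v : ℕ → Rˣ)

lemma mul_comm3 {S : Type} [Semigroup S] {g a b : S} (ha : g * a = a * g)
    (hb : g * b = b * g) : g * (a * b) = (a * b) * g := by
  rw [← mul_assoc, ha, mul_assoc, hb, ← mul_assoc]

lemma comm_pow {S : Type} [Monoid S] {g a : S} (h : g * a = a * g) (s : ℕ) :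
    g * a ^ s = a ^ s * g := by
  induction s with
  | zero => simp
  | succ s ih => rw [pow_succ, ← mul_assoc, ih, mul_assoc, h, ← mul_assoc]

lemma XA_two (m : ℕ) : XA r n R q (m + 2)
    = gA r n R q (m + 1) * XA r n R q (m + 1) * gA r n R q (m + 1) := rfl

lemma XAinv_two (m : ℕ) : XAinv r n R q (m + 2)
    = ginvA r n R q (m + 1) * XAinv r n R q (m + 1) * ginvA r n R q (m + 1) := rfl

lemma fA_two (m : ℕ) : fA r n d R q v (m + 2)
    = gA r n R q (m + 1) * fA r n d R q v (m + 1) * gA r n R q (m + 1) := rfl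

lemma hA_two (m : ℕ) : hA r n d R q v (m + 2)
    = gA r n R q (m + 1) * hA r n d R q v (m + 1) * ginvA r n R q (m + 1) := rfl

lemma XA_one : XA r n R q 1 = mkA r n R q (XF n R) := rfl
lemma XAinv_one : XAinv r n R q 1 = mkA r n R q (XinvF n R) := rfl

lemma XA_mul_XAinv_one : XA r n R q 1 * XAinv r n R q 1 = 1 := by
  rw [XA_one, XAinv_one, ← map_mul, rel_eq r n R q Rel.XXinv, map_one]

lemma XAinv_mul_XA_one : XAinv r n R q 1 * XA r n R q 1 = 1 := by
  rw [XA_one, XAinv_one, ← map_mul, rel_eq r n R q Rel.XinvX, map_one]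

lemma tA_XA_comm : ∀ k, 1 ≤ k → k ≤ n → ∀ j, 1 ≤ j → j ≤ n →
    tA r n R q j * XA r n R q k = XA r n R q k * tA r n R q j := by
  intro k
  induction k with
  | zero => omega
  | succ k ih =>
    intro hk1 hk2 j hj1 hj2
    rcases Nat.eq_zero_or_pos k with rfl | hk
    · rw [XA_one]
      simp only [tA, ← map_mul]
      exact rel_eq r n R q (Rel.tX hj1 hj2)
    · obtain ⟨m, rfl⟩ : ∃ m, k = m + 1 := ⟨k - 1, by omega⟩
      have hg1 : 1 ≤ m + 1 := by omega
      have hg2 : m + 1 ≤ n - 1 := by omega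
      have hb := sig_le n hg1 hg2 hj1 hj2
      rw [show m + 1 + 1 = m + 2 from rfl, XA_two]
      rw [← mul_assoc, ← mul_assoc, tA_gA r n R q hg1 hg2 hj1 hj2,
        mul_assoc (gA r n R q (m + 1)), ih (by omega) (by omega) _ hb.1 hb.2,
        ← mul_assoc, mul_assoc (gA r n R q (m + 1) * XA r n R q (m + 1)),
        tA_gA r n R q hg1 hg2 hb.1 hb.2, sig_sig]
      simp only [mul_assoc]

lemma gA_XA_comm {i : ℕ} (h1 : 1 ≤ i) (h2 : i ≤ n - 1) :
    ∀ j, 1 ≤ j → j ≤ i - 1 → gA r n R q i * XA r n R q j = XA r n R q j * gA r n R q i := by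
  intro j
  induction j with
  | zero => omega
  | succ j ih =>
    intro hj1 hj2
    rcases Nat.eq_zero_or_pos j with rfl | hj
    · rw [XA_one]
      simp only [gA, ← map_mul]
      exact rel_eq r n R q (Rel.gX (by omega) h2)
    · obtain ⟨m, rfl⟩ : ∃ m, j = m + 1 := ⟨j - 1, by omega⟩
      have hgg : gA r n R q i * gA r n R q (m + 1) = gA r n R q (m + 1) * gA r n R q i :=
        (gA_comm_gA r n R q (by omega) (by omega) h2).symm
      rw [show m + 1 + 1 = m + 2 from rfl, XA_two]
      rw [← mul_assoc, ← mul_assoc, hgg, mul_assoc (gA r n R q (m + 1)),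
        ih (by omega) (by omega), ← mul_assoc,
        mul_assoc (gA r n R q (m + 1) * XA r n R q (m + 1)), hgg]
      simp only [mul_assoc]

lemma gA_tA_far {i k : ℕ} (h1 : 1 ≤ i) (h2 : i ≤ n - 1) (hk1 : 1 ≤ k) (hk2 : k ≤ n)
    (hlt : k < i) : gA r n R q i * tA r n R q k = tA r n R q k * gA r n R q i := by
  have h := gA_tA r n R q h1 h2 hk1 hk2
  rwa [show sig i k = k by unfold sig; rw [if_neg (by omega), if_neg (by omega)]] at h

lemma gA_eA_far {i k : ℕ} (h1 : 1 ≤ i) (h2 : i ≤ n - 1) (hk1 : 1 ≤ k) (hk2 : k + 1 < i) :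
    gA r n R q i * eA r n R q k = eA r n R q k * gA r n R q i := by
  have hkn : k + 1 ≤ n := by omega
  rw [eA_eq, mul_smul_comm, smul_mul_assoc]
  congr 1
  rw [Finset.mul_sum, Finset.sum_mul]
  refine Finset.sum_congr rfl fun s _ => mul_comm3
    (comm_pow (gA_tA_far r n R q h1 h2 hk1 (by omega) (by omega)) s)
    (comm_pow (gA_tA_far r n R q h1 h2 (by omega) hkn (by omega)) (r - s))

lemma gA_ginvA_far {i k : ℕ} (h2 : i ≤ n - 1) (hk1 : 1 ≤ k) (hk2 : k + 2 ≤ i) :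
    gA r n R q i * ginvA r n R q k = ginvA r n R q k * gA r n R q i := by
  unfold ginvA
  rw [mul_sub, sub_mul, mul_smul_comm, smul_mul_assoc,
    (gA_comm_gA r n R q hk1 hk2 h2), gA_eA_far r n R q (by omega) h2 hk1 (by omega)]

lemma gA_XAinv_comm {i : ℕ} (h1 : 1 ≤ i) (h2 : i ≤ n - 1) :
    ∀ j, 1 ≤ j → j ≤ i - 1 →
      gA r n R q i * XAinv r n R q j = XAinv r n R q j * gA r n R q i := by
  intro j
  induction j with
  | zero => omega
  | succ j ih =>
    intro hj1 hj2
    rcases Nat.eq_zero_or_pos j with rfl | hj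
    · have hgx : gA r n R q i * XA r n R q 1 = XA r n R q 1 * gA r n R q i := by
        rw [XA_one]
        simp only [gA, ← map_mul]
        exact rel_eq r n R q (Rel.gX (by omega) h2)
      calc gA r n R q i * XAinv r n R q 1
          = (XAinv r n R q 1 * XA r n R q 1) * (gA r n R q i * XAinv r n R q 1) := by
            rw [XAinv_mul_XA_one, one_mul]
        _ = XAinv r n R q 1 * ((XA r n R q 1 * gA r n R q i) * XAinv r n R q 1) := by
            simp only [mul_assoc]
        _ = XAinv r n R q 1 * ((gA r n R q i * XA r n R q 1) * XAinv r n R q 1) := by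
            rw [hgx]
        _ = XAinv r n R q 1 * (gA r n R q i * (XA r n R q 1 * XAinv r n R q 1)) := by
            simp only [mul_assoc]
        _ = XAinv r n R q 1 * gA r n R q i := by rw [XA_mul_XAinv_one, mul_one]
    · obtain ⟨m, rfl⟩ : ∃ m, j = m + 1 := ⟨j - 1, by omega⟩
      have hgg : gA r n R q i * ginvA r n R q (m + 1) = ginvA r n R q (m + 1) * gA r n R q i :=
        gA_ginvA_far r n R q h2 (by omega) (by omega)
      rw [show m + 1 + 1 = m + 2 from rfl, XAinv_two]
      rw [← mul_assoc, ← mul_assoc, hgg, mul_assoc (ginvA r n R q (m + 1)),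
        ih (by omega) (by omega), ← mul_assoc,
        mul_assoc (ginvA r n R q (m + 1) * XAinv r n R q (m + 1)), hgg]
      simp only [mul_assoc]

end Aux2
section Aux3
variable (r n d : ℕ) (R : Type) [CommRing R] [Invertible (r : R)] (q : Rˣ) (v : ℕ → Rˣ)

lemma gXgX_comm : ∀ i, 1 ≤ i → i ≤ n - 1 →
    gA r n R q i * XA r n R q i * gA r n R q i * XA r n R q i
      = XA r n R q i * gA r n R q i * XA r n R q i * gA r n R q i := by
  intro i
  induction i with
  | zero => omega
  | succ i ih =>
    intro h1 h2
    rcases Nat.eq_zero_or_pos i with rfl | hi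
    · rw [XA_one]
      simp only [gA, ← map_mul]
      exact rel_eq r n R q Rel.gXgX
    · obtain ⟨m, rfl⟩ : ∃ m, i = m + 1 := ⟨i - 1, by omega⟩
      rw [show m + 1 + 1 = m + 2 from rfl, XA_two]
      set g := gA r n R q (m + 1) with hgdef
      set g' := gA r n R q (m + 2) with hg'def
      set X := XA r n R q (m + 1) with hXdef
      have hb : g * g' * g = g' * g * g' := by
        rw [hgdef, hg'def, show m + 2 = m + 1 + 1 from rfl]
        exact braidA r n R q (by omega) (by omega)
      have hcx : g' * X = X * g' :=
        gA_XA_comm r n R q (by omega) h2 (m + 1) (by omega) (by omega)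
      have hih : g * X * g * X = X * g * X * g := ih (by omega) (by omega)
      have br' : ∀ x, g * (g' * (g * x)) = g' * (g * (g' * x)) := fun x => by
        rw [← mul_assoc, ← mul_assoc, hb, mul_assoc, mul_assoc]
      have br2' : ∀ x, g' * (g * (g' * x)) = g * (g' * (g * x)) := fun x => (br' x).symm
      have brr : g * (g' * g) = g' * (g * g') := by
        rw [← mul_assoc, hb, mul_assoc]
      have cx' : ∀ x, g' * (X * x) = X * (g' * x) := fun x => by
        rw [← mul_assoc, hcx, mul_assoc]
      have cx'' : ∀ x, X * (g' * x) = g' * (X * x) := fun x => (cx' x).symm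
      have ih' : ∀ x, g * (X * (g * (X * x))) = X * (g * (X * (g * x))) := fun x => by
        rw [← mul_assoc, ← mul_assoc, ← mul_assoc, hih, mul_assoc, mul_assoc, mul_assoc]
      simp only [mul_assoc]
      conv_lhs => rw [br' (X * g), cx'' (g * (g' * (X * g))), br2' (X * (g * (g' * (X * g)))),
        cx' g, ih' (g' * g), brr, cx'' (g * g')]
      conv_rhs => rw [br' (X * (g * g')), cx'' (g * (g' * (X * (g * g'))))]

lemma XA_adj_comm {i : ℕ} (h1 : 1 ≤ i) (h2 : i ≤ n - 1) :
    XA r n R q i * XA r n R q (i + 1) = XA r n R q (i + 1) * XA r n R q i := by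
  obtain ⟨m, rfl⟩ : ∃ m, i = m + 1 := ⟨i - 1, by omega⟩
  rw [show m + 1 + 1 = m + 2 from rfl, XA_two]
  have h := gXgX_comm r n R q (m + 1) h1 h2
  simp only [mul_assoc] at h ⊢
  exact h.symm

lemma eA_XA_comm {i k : ℕ} (h1 : 1 ≤ i) (h2 : i ≤ n - 1) (hk1 : 1 ≤ k) (hk2 : k ≤ n) :
    eA r n R q i * XA r n R q k = XA r n R q k * eA r n R q i := by
  rw [eA_eq, smul_mul_assoc, mul_smul_comm]
  congr 1
  rw [Finset.sum_mul, Finset.mul_sum]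
  refine Finset.sum_congr rfl fun s _ => ?_
  exact (mul_comm3
    (comm_pow (tA_XA_comm r n R q k hk1 hk2 i h1 (by omega)).symm s)
    (comm_pow (tA_XA_comm r n R q k hk1 hk2 (i + 1) (by omega) (by omega)).symm (r - s))).symm

lemma gA_XA_mul (hr : 1 ≤ r) {i : ℕ} (h1 : 1 ≤ i) (h2 : i ≤ n - 1) :
    gA r n R q i * XA r n R q i
      = XA r n R q (i + 1) * gA r n R q i - qd R q • (XA r n R q (i + 1) * eA r n R q i) := by
  have key : XA r n R q (i + 1) * ginvA r n R q i = gA r n R q i * XA r n R q i := by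
    obtain ⟨m, rfl⟩ : ∃ m, i = m + 1 := ⟨i - 1, by omega⟩
    rw [show m + 1 + 1 = m + 2 from rfl, XA_two, mul_assoc, gA_ginvA r n R q hr h1 h2, mul_one]
  rw [← key]
  unfold ginvA
  rw [mul_sub, mul_smul_comm]

lemma gA_XA_pow (hr : 1 ≤ r) {i : ℕ} (h1 : 1 ≤ i) (h2 : i ≤ n - 1) (e : ℕ) :
    gA r n R q i * XA r n R q i ^ e
      = XA r n R q (i + 1) ^ e * gA r n R q i
        - qd R q • ∑ j ∈ Finset.range e,
            XA r n R q i ^ (e - 1 - j) * (XA r n R q (i + 1) ^ (j + 1) * eA r n R q i) := by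
  induction e with
  | zero => simp
  | succ e ih =>
    have hXX' : XA r n R q (i + 1) * XA r n R q i = XA r n R q i * XA r n R q (i + 1) :=
      (XA_adj_comm r n R q h1 h2).symm
    have heX : eA r n R q i * XA r n R q i = XA r n R q i * eA r n R q i :=
      eA_XA_comm r n R q h1 h2 h1 (by omega)
    rw [pow_succ', ← mul_assoc, gA_XA_mul r n R q hr h1 h2, sub_mul, smul_mul_assoc,
      mul_assoc (XA r n R q (i + 1)), ih, mul_sub, mul_smul_comm,
      ← mul_assoc (XA r n R q (i + 1)), ← pow_succ']
    have piece1 : XA r n R q (i + 1) * ∑ j ∈ Finset.range e,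
        XA r n R q i ^ (e - 1 - j) * (XA r n R q (i + 1) ^ (j + 1) * eA r n R q i)
        = ∑ j ∈ Finset.range e,
          XA r n R q i ^ (e - 1 - j) * (XA r n R q (i + 1) ^ (j + 2) * eA r n R q i) := by
      rw [Finset.mul_sum]
      refine Finset.sum_congr rfl fun j _ => ?_
      rw [← mul_assoc, comm_pow hXX' (e - 1 - j), mul_assoc,
        ← mul_assoc (XA r n R q (i + 1)) (XA r n R q (i + 1) ^ (j + 1)), ← pow_succ']
    have piece2 : (XA r n R q (i + 1) * eA r n R q i) * XA r n R q i ^ e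
        = XA r n R q i ^ e * (XA r n R q (i + 1) ^ 1 * eA r n R q i) := by
      rw [pow_one, mul_assoc, comm_pow heX e, ← mul_assoc, comm_pow hXX' e, mul_assoc]
    rw [piece1, piece2, Finset.sum_range_succ']
    have hsum : ∑ j ∈ Finset.range e,
        XA r n R q i ^ (e + 1 - 1 - (j + 1)) * (XA r n R q (i + 1) ^ (j + 1 + 1) * eA r n R q i)
        = ∑ j ∈ Finset.range e,
          XA r n R q i ^ (e - 1 - j) * (XA r n R q (i + 1) ^ (j + 2) * eA r n R q i) := by
      refine Finset.sum_congr rfl fun j _ => ?_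
      rw [show e + 1 - 1 - (j + 1) = e - 1 - j by omega]
    rw [hsum, show e + 1 - 1 - 0 = e by omega, smul_add, ← sub_sub]

end Aux3
section Aux4
variable (r n d : ℕ) (R : Type) [CommRing R] [Invertible (r : R)] (q : Rˣ) (v : ℕ → Rˣ)

lemma XA_mem_Psub {k m : ℕ} (h1 : 1 ≤ k) (h2 : k ≤ m) :
    XA r n R q k ∈ Psub r n R q m :=
  Algebra.subset_adjoin ⟨k, h1, h2, Or.inl rfl⟩

lemma XAinv_mem_Psub {k m : ℕ} (h1 : 1 ≤ k) (h2 : k ≤ m) :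
    XAinv r n R q k ∈ Psub r n R q m :=
  Algebra.subset_adjoin ⟨k, h1, h2, Or.inr rfl⟩

lemma Psub_mono {m m' : ℕ} (h : m ≤ m') : Psub r n R q m ≤ Psub r n R q m' := by
  apply Algebra.adjoin_mono
  rintro x ⟨i, hi1, hi2, hx⟩
  exact ⟨i, hi1, le_trans hi2 h, hx⟩

lemma tA_mem_Ysub {k m : ℕ} (h1 : 1 ≤ k) (h2 : k ≤ m) :
    tA r n R q k ∈ Ysub r n R q m :=
  Algebra.subset_adjoin (Or.inl ⟨k, h1, h2, rfl⟩)

lemma gA_mem_Ysub {k m : ℕ} (h1 : 1 ≤ k) (h2 : k ≤ m - 1) :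
    gA r n R q k ∈ Ysub r n R q m :=
  Algebra.subset_adjoin (Or.inr ⟨k, h1, h2, rfl⟩)

lemma Ysub_mono {m m' : ℕ} (h : m ≤ m') : Ysub r n R q m ≤ Ysub r n R q m' := by
  apply Algebra.adjoin_mono
  rintro x (⟨i, hi1, hi2, hx⟩ | ⟨i, hi1, hi2, hx⟩)
  · exact Or.inl ⟨i, hi1, by omega, hx⟩
  · exact Or.inr ⟨i, hi1, by omega, hx⟩

lemma eA_mem_Ysub {i : ℕ} (h1 : 1 ≤ i) : eA r n R q i ∈ Ysub r n R q (i + 1) := by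
  rw [eA_eq]
  refine Subalgebra.smul_mem _ (Subalgebra.sum_mem _ fun s _ => mul_mem
    (pow_mem (tA_mem_Ysub r n R q h1 (by omega)) s)
    (pow_mem (tA_mem_Ysub r n R q (by omega) (le_refl _)) (r - s))) _

lemma ginvA_mem_Ysub {i : ℕ} (h1 : 1 ≤ i) : ginvA r n R q i ∈ Ysub r n R q (i + 1) := by
  unfold ginvA
  exact sub_mem (gA_mem_Ysub r n R q h1 (by omega))
    (Subalgebra.smul_mem _ (eA_mem_Ysub r n R q h1) _)

lemma gA_comm_Psub {i m : ℕ} (hm : m + 1 ≤ i) (h2 : i ≤ n - 1) {p : AYH r n R q}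
    (hp : p ∈ Psub r n R q m) : gA r n R q i * p = p * gA r n R q i := by
  have hsub : Psub r n R q m ≤ Subalgebra.centralizer R {gA r n R q i} := by
    apply Algebra.adjoin_le
    rintro x ⟨j, hj1, hj2, (rfl | rfl)⟩
    · refine SetLike.mem_coe.2 ((Subalgebra.mem_centralizer_iff R).2 ?_)
      rintro y rfl
      exact gA_XA_comm r n R q (by omega) h2 j hj1 (by omega)
    · refine SetLike.mem_coe.2 ((Subalgebra.mem_centralizer_iff R).2 ?_)
      rintro y rfl
      exact gA_XAinv_comm r n R q (by omega) h2 j hj1 (by omega)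
  have hc := hsub hp
  rw [Subalgebra.mem_centralizer_iff] at hc
  exact hc _ rfl

lemma f1A_succ (dd : ℕ) : f1A r n (dd + 1) R q v
    = f1A r n dd R q v * (XA r n R q 1 - algebraMap R (AYH r n R q) ((v dd : R))) := by
  unfold f1A
  rw [List.range_succ, List.map_append, List.prod_append, List.map_singleton,
    List.prod_singleton]

lemma adC_succ (dd : ℕ) : adC (dd + 1) R v = adC dd R v * (-(v dd : R)) := by
  unfold adC
  rw [List.range_succ, List.map_append, List.prod_append, List.map_singleton,
    List.prod_singleton, pow_succ]
  ring

lemma f1A_zero : f1A r n 0 R q v = 1 := by simp [f1A]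

lemma base_f (dd : ℕ) : f1A r n dd R q v - XA r n R q 1 ^ dd ∈
    Submodule.span R {x : AYH r n R q | ∃ e, e < dd ∧ x = XA r n R q 1 ^ e} := by
  induction dd with
  | zero =>
    rw [f1A_zero, pow_zero, sub_self]
    exact Submodule.zero_mem _
  | succ dd ih =>
    rw [f1A_succ]
    have key : f1A r n dd R q v * (XA r n R q 1 - algebraMap R (AYH r n R q) ((v dd : R)))
          - XA r n R q 1 ^ (dd + 1)
        = (f1A r n dd R q v - XA r n R q 1 ^ dd)
            * (XA r n R q 1 - algebraMap R (AYH r n R q) ((v dd : R)))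
          - ((v dd : R)) • XA r n R q 1 ^ dd := by
      rw [sub_mul, mul_sub (XA r n R q 1 ^ dd), ← pow_succ, ← Algebra.commutes,
        ← Algebra.smul_def]
      abel
    rw [key]
    refine Submodule.sub_mem _ ?_
      (Submodule.smul_mem _ _ (Submodule.subset_span ⟨dd, by omega, rfl⟩))
    have hmr : Submodule.span R {x : AYH r n R q | ∃ e, e < dd ∧ x = XA r n R q 1 ^ e} ≤
        (Submodule.span R {x : AYH r n R q | ∃ e, e < dd + 1 ∧ x = XA r n R q 1 ^ e}).comap
          (LinearMap.mulRight R (XA r n R q 1 - algebraMap R (AYH r n R q) ((v dd : R)))) := by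
      rw [Submodule.span_le]
      rintro z ⟨e, he, rfl⟩
      refine Submodule.mem_comap.2 ?_
      have hz : XA r n R q 1 ^ e * (XA r n R q 1 - algebraMap R (AYH r n R q) ((v dd : R)))
          = XA r n R q 1 ^ (e + 1) - ((v dd : R)) • XA r n R q 1 ^ e := by
        rw [mul_sub, ← pow_succ, ← Algebra.commutes, ← Algebra.smul_def]
      rw [LinearMap.mulRight_apply, hz]
      exact Submodule.sub_mem _ (Submodule.subset_span ⟨e + 1, by omega, rfl⟩)
        (Submodule.smul_mem _ _ (Submodule.subset_span ⟨e, by omega, rfl⟩))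
    exact hmr ih

lemma base_h (dd : ℕ) : f1A r n dd R q v - algebraMap R (AYH r n R q) (adC dd R v) ∈
    Submodule.span R {x : AYH r n R q | ∃ f, 1 ≤ f ∧ f ≤ dd ∧ x = XA r n R q 1 ^ f} := by
  induction dd with
  | zero =>
    rw [f1A_zero, show adC 0 R v = 1 by simp [adC], map_one, sub_self]
    exact Submodule.zero_mem _
  | succ dd ih =>
    rw [f1A_succ]
    have key : f1A r n dd R q v * (XA r n R q 1 - algebraMap R (AYH r n R q) ((v dd : R)))
          - algebraMap R (AYH r n R q) (adC (dd + 1) R v)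
        = (f1A r n dd R q v - algebraMap R (AYH r n R q) (adC dd R v))
            * (XA r n R q 1 - algebraMap R (AYH r n R q) ((v dd : R)))
          + (adC dd R v) • XA r n R q 1 := by
      have mulneg : ∀ a b : AYH r n R q, a * -b = -(a * b) := fun a b =>
        eq_neg_of_add_eq_zero_left (by rw [← mul_add, neg_add_cancel, mul_zero])
      rw [adC_succ, map_mul, map_neg, mulneg, sub_neg_eq_add, Algebra.smul_def]
      simp only [sub_mul, mul_sub]
      abel
    rw [key]
    refine Submodule.add_mem _ ?_
      (Submodule.smul_mem _ _ (Submodule.subset_span ⟨1, le_refl _, by omega, (pow_one _).symm⟩))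
    have hmr : Submodule.span R
          {x : AYH r n R q | ∃ f, 1 ≤ f ∧ f ≤ dd ∧ x = XA r n R q 1 ^ f} ≤
        (Submodule.span R
            {x : AYH r n R q | ∃ f, 1 ≤ f ∧ f ≤ dd + 1 ∧ x = XA r n R q 1 ^ f}).comap
          (LinearMap.mulRight R (XA r n R q 1 - algebraMap R (AYH r n R q) ((v dd : R)))) := by
      rw [Submodule.span_le]
      rintro z ⟨f, hf1, hf2, rfl⟩
      refine Submodule.mem_comap.2 ?_
      have hz : XA r n R q 1 ^ f * (XA r n R q 1 - algebraMap R (AYH r n R q) ((v dd : R)))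
          = XA r n R q 1 ^ (f + 1) - ((v dd : R)) • XA r n R q 1 ^ f := by
        rw [mul_sub, ← pow_succ, ← Algebra.commutes, ← Algebra.smul_def]
      rw [LinearMap.mulRight_apply, hz]
      exact Submodule.sub_mem _ (Submodule.subset_span ⟨f + 1, by omega, by omega, rfl⟩)
        (Submodule.smul_mem _ _ (Submodule.subset_span ⟨f, hf1, by omega, rfl⟩))
    exact hmr ih

end Aux4
section Aux5
variable (r n d : ℕ) (R : Type) [CommRing R] [Invertible (r : R)] (q : Rˣ) (v : ℕ → Rˣ)

/-- The generating set for the `f`-part. -/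
def MfS (i : ℕ) : Set (AYH r n R q) :=
  {x | ∃ e, e < d ∧ ∃ p ∈ Psub r n R q (i - 1), ∃ y ∈ Ysub r n R q i,
    x = p * XA r n R q i ^ e * y}

/-- The generating set for the `h`-part. -/
def MhS (i : ℕ) : Set (AYH r n R q) :=
  {x | ∃ f, 1 ≤ f ∧ f ≤ d ∧ ∃ p ∈ Psub r n R q (i - 1), ∃ y ∈ Ysub r n R q i,
    x = p * XA r n R q i ^ f * y}

lemma MfS_mul_left {m : ℕ} {p x : AYH r n R q} (hp : p ∈ Psub r n R q (m - 1))
    (hx : x ∈ Submodule.span R (MfS r n d R q m)) :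
    p * x ∈ Submodule.span R (MfS r n d R q m) := by
  have h : Submodule.span R (MfS r n d R q m) ≤
      (Submodule.span R (MfS r n d R q m)).comap (LinearMap.mulLeft R p) := by
    rw [Submodule.span_le]
    rintro z ⟨e, he, p0, hp0, y0, hy0, rfl⟩
    refine Submodule.mem_comap.2
      (Submodule.subset_span ⟨e, he, p * p0, mul_mem hp hp0, y0, hy0, ?_⟩)
    simp only [LinearMap.mulLeft_apply, mul_assoc]
  exact h hx

lemma MfS_mul_right {m : ℕ} {y x : AYH r n R q} (hy : y ∈ Ysub r n R q m)
    (hx : x ∈ Submodule.span R (MfS r n d R q m)) :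
    x * y ∈ Submodule.span R (MfS r n d R q m) := by
  have h : Submodule.span R (MfS r n d R q m) ≤
      (Submodule.span R (MfS r n d R q m)).comap (LinearMap.mulRight R y) := by
    rw [Submodule.span_le]
    rintro z ⟨e, he, p0, hp0, y0, hy0, rfl⟩
    refine Submodule.mem_comap.2
      (Submodule.subset_span ⟨e, he, p0, hp0, y0 * y, mul_mem hy0 hy, ?_⟩)
    simp only [LinearMap.mulRight_apply, mul_assoc]
  exact h hx

lemma MhS_mul_left {m : ℕ} {p x : AYH r n R q} (hp : p ∈ Psub r n R q (m - 1))
    (hx : x ∈ Submodule.span R (MhS r n d R q m)) :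
    p * x ∈ Submodule.span R (MhS r n d R q m) := by
  have h : Submodule.span R (MhS r n d R q m) ≤
      (Submodule.span R (MhS r n d R q m)).comap (LinearMap.mulLeft R p) := by
    rw [Submodule.span_le]
    rintro z ⟨f, hf1, hf2, p0, hp0, y0, hy0, rfl⟩
    refine Submodule.mem_comap.2
      (Submodule.subset_span ⟨f, hf1, hf2, p * p0, mul_mem hp hp0, y0, hy0, ?_⟩)
    simp only [LinearMap.mulLeft_apply, mul_assoc]
  exact h hx

lemma MhS_mul_right {m : ℕ} {y x : AYH r n R q} (hy : y ∈ Ysub r n R q m)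
    (hx : x ∈ Submodule.span R (MhS r n d R q m)) :
    x * y ∈ Submodule.span R (MhS r n d R q m) := by
  have h : Submodule.span R (MhS r n d R q m) ≤
      (Submodule.span R (MhS r n d R q m)).comap (LinearMap.mulRight R y) := by
    rw [Submodule.span_le]
    rintro z ⟨f, hf1, hf2, p0, hp0, y0, hy0, rfl⟩
    refine Submodule.mem_comap.2
      (Submodule.subset_span ⟨f, hf1, hf2, p0, hp0, y0 * y, mul_mem hy0 hy, ?_⟩)
    simp only [LinearMap.mulRight_apply, mul_assoc]
  exact h hx

lemma Xpow_f_mem {m e : ℕ} (he : e < d) :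
    XA r n R q m ^ e ∈ Submodule.span R (MfS r n d R q m) :=
  Submodule.subset_span ⟨e, he, 1, one_mem _, 1, one_mem _, by rw [one_mul, mul_one]⟩

lemma Xpow_h_mem {m f : ℕ} (hf1 : 1 ≤ f) (hf2 : f ≤ d) :
    XA r n R q m ^ f ∈ Submodule.span R (MhS r n d R q m) :=
  Submodule.subset_span ⟨f, hf1, hf2, 1, one_mem _, 1, one_mem _, by rw [one_mul, mul_one]⟩

lemma step_f (hr : 1 ≤ r) {i : ℕ} (h1 : 1 ≤ i) (h2 : i + 1 ≤ n) {x : AYH r n R q}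
    (hx : x ∈ Submodule.span R (MfS r n d R q i)) :
    gA r n R q i * x * gA r n R q i ∈ Submodule.span R (MfS r n d R q (i + 1)) := by
  have h2' : i ≤ n - 1 := by omega
  have key : Submodule.span R (MfS r n d R q i) ≤
      (Submodule.span R (MfS r n d R q (i + 1))).comap
        ((LinearMap.mulRight R (gA r n R q i)).comp (LinearMap.mulLeft R (gA r n R q i))) := by
    rw [Submodule.span_le]
    rintro z ⟨e, he, p, hp, y, hy, rfl⟩
    refine Submodule.mem_comap.2 ?_
    simp only [LinearMap.coe_comp, Function.comp_apply, LinearMap.mulLeft_apply,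
      LinearMap.mulRight_apply]
    have hgp : gA r n R q i * p = p * gA r n R q i :=
      gA_comm_Psub r n R q (by omega) h2' hp
    have rearr : gA r n R q i * (p * XA r n R q i ^ e * y) * gA r n R q i
        = p * ((gA r n R q i * XA r n R q i ^ e) * (y * gA r n R q i)) := by
      simp only [← mul_assoc]
      rw [hgp]
    rw [rearr]
    refine MfS_mul_left r n d R q (Psub_mono r n R q (by omega) hp) ?_
    rw [gA_XA_pow r n R q hr h1 h2' e, sub_mul, smul_mul_assoc, Finset.sum_mul]
    refine Submodule.sub_mem _ ?_
      (Submodule.smul_mem _ _ (Submodule.sum_mem _ fun j hj => ?_))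
    · rw [mul_assoc]
      refine MfS_mul_right r n d R q ?_ (Xpow_f_mem r n d R q he)
      exact mul_mem (gA_mem_Ysub r n R q h1 (by omega))
        (mul_mem (Ysub_mono r n R q (by omega) hy) (gA_mem_Ysub r n R q h1 (by omega)))
    · simp only [Finset.mem_range] at hj
      refine Submodule.subset_span ⟨j + 1, by omega, XA r n R q i ^ (e - 1 - j),
        pow_mem (XA_mem_Psub r n R q h1 (by omega)) _,
        eA r n R q i * (y * gA r n R q i),
        mul_mem (eA_mem_Ysub r n R q h1)
          (mul_mem (Ysub_mono r n R q (by omega) hy) (gA_mem_Ysub r n R q h1 (by omega))), ?_⟩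
      simp only [mul_assoc]
  simpa only [Submodule.mem_comap, LinearMap.coe_comp, Function.comp_apply,
    LinearMap.mulLeft_apply, LinearMap.mulRight_apply] using key hx

lemma step_h (hr : 1 ≤ r) {i : ℕ} (h1 : 1 ≤ i) (h2 : i + 1 ≤ n) {x : AYH r n R q}
    (hx : x ∈ Submodule.span R (MhS r n d R q i)) :
    gA r n R q i * x * ginvA r n R q i ∈ Submodule.span R (MhS r n d R q (i + 1)) := by
  have h2' : i ≤ n - 1 := by omega
  have key : Submodule.span R (MhS r n d R q i) ≤
      (Submodule.span R (MhS r n d R q (i + 1))).comap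
        ((LinearMap.mulRight R (ginvA r n R q i)).comp (LinearMap.mulLeft R (gA r n R q i))) := by
    rw [Submodule.span_le]
    rintro z ⟨f, hf1, hf2, p, hp, y, hy, rfl⟩
    refine Submodule.mem_comap.2 ?_
    simp only [LinearMap.coe_comp, Function.comp_apply, LinearMap.mulLeft_apply,
      LinearMap.mulRight_apply]
    have hgp : gA r n R q i * p = p * gA r n R q i :=
      gA_comm_Psub r n R q (by omega) h2' hp
    have rearr : gA r n R q i * (p * XA r n R q i ^ f * y) * ginvA r n R q i
        = p * ((gA r n R q i * XA r n R q i ^ f) * (y * ginvA r n R q i)) := by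
      simp only [← mul_assoc]
      rw [hgp]
    rw [rearr]
    refine MhS_mul_left r n d R q (Psub_mono r n R q (by omega) hp) ?_
    rw [gA_XA_pow r n R q hr h1 h2' f, sub_mul, smul_mul_assoc, Finset.sum_mul]
    refine Submodule.sub_mem _ ?_
      (Submodule.smul_mem _ _ (Submodule.sum_mem _ fun j hj => ?_))
    · rw [mul_assoc]
      refine MhS_mul_right r n d R q ?_ (Xpow_h_mem r n d R q hf1 hf2)
      exact mul_mem (gA_mem_Ysub r n R q h1 (by omega))
        (mul_mem (Ysub_mono r n R q (by omega) hy) (ginvA_mem_Ysub r n R q h1))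
    · simp only [Finset.mem_range] at hj
      refine Submodule.subset_span ⟨j + 1, by omega, by omega, XA r n R q i ^ (f - 1 - j),
        pow_mem (XA_mem_Psub r n R q h1 (by omega)) _,
        eA r n R q i * (y * ginvA r n R q i),
        mul_mem (eA_mem_Ysub r n R q h1)
          (mul_mem (Ysub_mono r n R q (by omega) hy) (ginvA_mem_Ysub r n R q h1)), ?_⟩
      simp only [mul_assoc]
  simpa only [Submodule.mem_comap, LinearMap.coe_comp, Function.comp_apply,
    LinearMap.mulLeft_apply, LinearMap.mulRight_apply] using key hx

end Aux5
/-- For each `i = 1, …, n`,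
`f_i ∈ X_i^d + Σ_{e=0}^{d-1} P_{i-1} X_i^e Y_{r,i}` and
`h_i ∈ a_d + Σ_{f=1}^{d} P_{i-1} X_i^f Y_{r,i}`, where `P_{i-1} = R[X_1^{±1},…,X_{i-1}^{±1}]`
and `Y_{r,i}` is the `R`-subalgebra of `Ŷ_{r,n}` generated by `t_1,…,t_i,g_1,…,g_{i-1}`. -/
theorem fi_hi_expansion
    (r n d : ℕ) (hr : 1 ≤ r) (hn : 1 ≤ n) (hd : 1 ≤ d)
    (R : Type) [CommRing R] [Invertible (r : R)] (q : Rˣ) (v : ℕ → Rˣ)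
    (i : ℕ) (hi1 : 1 ≤ i) (hi2 : i ≤ n) :
    fA r n d R q v i - XA r n R q i ^ d ∈
      Submodule.span R {x : AYH r n R q | ∃ e, e < d ∧
        ∃ p ∈ Psub r n R q (i - 1), ∃ y ∈ Ysub r n R q i,
          x = p * XA r n R q i ^ e * y} ∧
    hA r n d R q v i - algebraMap R (AYH r n R q) (adC d R v) ∈
      Submodule.span R {x : AYH r n R q | ∃ f, 1 ≤ f ∧ f ≤ d ∧
        ∃ p ∈ Psub r n R q (i - 1), ∃ y ∈ Ysub r n R q i,
          x = p * XA r n R q i ^ f * y} := by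
  show fA r n d R q v i - XA r n R q i ^ d ∈ Submodule.span R (MfS r n d R q i) ∧
    hA r n d R q v i - algebraMap R (AYH r n R q) (adC d R v) ∈
      Submodule.span R (MhS r n d R q i)
  obtain ⟨c, rfl⟩ : ∃ c, d = c + 1 := ⟨d - 1, by omega⟩
  revert hi1 hi2
  induction i with
  | zero => intro h1 h2; omega
  | succ i ih =>
    intro hi1 hi2
    rcases Nat.eq_zero_or_pos i with rfl | hi
    · simp only [Nat.zero_add]
      constructor
      · refine Submodule.span_mono ?_ (base_f r n R q v (c + 1))
        rintro x ⟨e, he, rfl⟩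
        exact ⟨e, he, 1, one_mem _, 1, one_mem _, by rw [one_mul, mul_one]⟩
      · refine Submodule.span_mono ?_ (base_h r n R q v (c + 1))
        rintro x ⟨f, hf1, hf2, rfl⟩
        exact ⟨f, hf1, hf2, 1, one_mem _, 1, one_mem _, by rw [one_mul, mul_one]⟩
    · obtain ⟨ihf, ihh⟩ := ih (by omega) (by omega)
      obtain ⟨m, rfl⟩ : ∃ m, i = m + 1 := ⟨i - 1, by omega⟩
      rw [show m + 1 + 1 = m + 2 from rfl]
      constructor
      · have hsplit : fA r n (c + 1) R q v (m + 2) - XA r n R q (m + 2) ^ (c + 1)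
            = gA r n R q (m + 1)
                * (fA r n (c + 1) R q v (m + 1) - XA r n R q (m + 1) ^ (c + 1))
                * gA r n R q (m + 1)
              + (gA r n R q (m + 1) * XA r n R q (m + 1) ^ (c + 1) * gA r n R q (m + 1)
                 - XA r n R q (m + 2) ^ (c + 1)) := by
          rw [fA_two, mul_sub, sub_mul]
          abel
        rw [hsplit]
        refine Submodule.add_mem _
          (step_f r n (c + 1) R q hr (by omega) (by omega) ihf) ?_
        have key2 : gA r n R q (m + 1) * XA r n R q (m + 1) ^ (c + 1) * gA r n R q (m + 1)
              - XA r n R q (m + 2) ^ (c + 1)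
            = - (qd R q • ∑ j ∈ Finset.range c,
                XA r n R q (m + 1) ^ (c - j)
                  * (XA r n R q (m + 2) ^ (j + 1) * eA r n R q (m + 1))
                  * gA r n R q (m + 1)) := by
          rw [gA_XA_pow r n R q hr (by omega) (by omega) (c + 1),
            show m + 1 + 1 = m + 2 from rfl, sub_mul, smul_mul_assoc, Finset.sum_mul,
            mul_assoc (XA r n R q (m + 2) ^ (c + 1)) (gA r n R q (m + 1)) (gA r n R q (m + 1)),
            ← sq, gA_sq r n R q (by omega) (by omega), mul_add, mul_one, mul_smul_comm]
          have hsum2 : ∑ j ∈ Finset.range (c + 1),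
              XA r n R q (m + 1) ^ (c + 1 - 1 - j)
                * (XA r n R q (m + 2) ^ (j + 1) * eA r n R q (m + 1))
                * gA r n R q (m + 1)
              = (∑ j ∈ Finset.range c,
                  XA r n R q (m + 1) ^ (c - j)
                    * (XA r n R q (m + 2) ^ (j + 1) * eA r n R q (m + 1))
                    * gA r n R q (m + 1))
                + XA r n R q (m + 2) ^ (c + 1)
                    * (eA r n R q (m + 1) * gA r n R q (m + 1)) := by
            rw [Finset.sum_range_succ, show c + 1 - 1 - c = 0 by omega, pow_zero,
              one_mul, mul_assoc]
            refine congrArg₂ (· + ·) (Finset.sum_congr rfl fun j _ => ?_) rfl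
            rw [show c + 1 - 1 - j = c - j by omega]
          rw [hsum2, smul_add]
          abel
        rw [key2]
        refine Submodule.neg_mem _
          (Submodule.smul_mem _ _ (Submodule.sum_mem _ fun j hj => ?_))
        simp only [Finset.mem_range] at hj
        refine Submodule.subset_span ⟨j + 1, by omega, XA r n R q (m + 1) ^ (c - j),
          pow_mem (XA_mem_Psub r n R q (by omega) (by omega)) _,
          eA r n R q (m + 1) * gA r n R q (m + 1),
          mul_mem (eA_mem_Ysub r n R q (by omega))
            (gA_mem_Ysub r n R q (by omega) (by omega)), ?_⟩
        simp only [mul_assoc]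
      · have hcomm : gA r n R q (m + 1) * algebraMap R (AYH r n R q) (adC (c + 1) R v)
              * ginvA r n R q (m + 1) = algebraMap R (AYH r n R q) (adC (c + 1) R v) := by
          rw [← Algebra.commutes, mul_assoc, gA_ginvA r n R q hr (by omega) (by omega),
            mul_one]
        have hsplit : hA r n (c + 1) R q v (m + 2)
              - algebraMap R (AYH r n R q) (adC (c + 1) R v)
            = gA r n R q (m + 1)
                * (hA r n (c + 1) R q v (m + 1)
                   - algebraMap R (AYH r n R q) (adC (c + 1) R v))
                * ginvA r n R q (m + 1) := by
          rw [hA_two, mul_sub, sub_mul, hcomm]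
        rw [hsplit]
        exact step_h r n (c + 1) R q hr (by omega) (by omega) ihh

end YH
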